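/- Let L, N, R ≥ 0 and Δ > 0, and let D_Δ be any causal sample-based differentiator with sampling period Δ. Then for every k ∈ ℕ with k ≥ 1 and every ε > 0, there exists f ∈ F_L^0 (hence f ∈ F_L^R) such that, feeding D_Δ the noise-free samples (f(jΔ))_{j∈ℕ}, there is an index ℓ ≥ k with |ḟ(ℓΔ) − [D_Δ f](ℓΔ)| ≥ (1 − ε)·L·Δ/2. Consequently, the worst-case error of D_Δ from time kΔ over F_L^R with any noise bound N satisfies M_N^{L,R}(kΔ) ≥ L·Δ/2. -/

import Mathlib

open Set Filter Topology

/-- `f ∈ F_L`: `f : [0,∞) → ℝ` is differentiable with derivative `f'`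
that is Lipschitz continuous with constant `L` on `[0,∞)`. -/
def IsFL (L : ℝ) (f f' : ℝ → ℝ) : Prop :=
  (∀ t ∈ Set.Ici (0:ℝ), HasDerivWithinAt f (f' t) (Set.Ici 0) t) ∧
  ∀ s ∈ Set.Ici (0:ℝ), ∀ t ∈ Set.Ici (0:ℝ), |f' s - f' t| ≤ L * |s - t|

/-- `η ∈ E_N`: measurable noise bounded by `N` on `[0,∞)`. -/
def IsEN (N : ℝ) (η : ℝ → ℝ) : Prop :=
  Measurable η ∧ ∀ t ∈ Set.Ici (0:ℝ), |η t| ≤ N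

/-- `f ∈ F_L^R`: member of `F_L` with `|f(0)| ≤ R` and `|ḟ(0)| ≤ R`. -/
def IsFLR (L R : ℝ) (f f' : ℝ → ℝ) : Prop :=
  IsFL L f f' ∧ |f 0| ≤ R ∧ |f' 0| ≤ R

/-- A differentiator is causal if its output at time `T` depends only on the
input on `[0, T]`. -/
def Causal (D : (ℝ → ℝ) → ℝ → ℝ) : Prop :=
  ∀ u₁ u₂ T, (∀ t ∈ Set.Icc (0:ℝ) T, u₁ t = u₂ t) → D u₁ T = D u₂ T

/-- A sample-based differentiator with sampling period `Δ` is causal if its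
output at step `k` depends only on the samples `u(jΔ)` for `j ≤ k`. -/
def SampleCausal (Δ : ℝ) (D : (ℝ → ℝ) → ℕ → ℝ) : Prop :=
  ∀ u₁ u₂ : ℝ → ℝ, ∀ k : ℕ,
    (∀ j : ℕ, j ≤ k → u₁ (j * Δ) = u₂ (j * Δ)) → D u₁ k = D u₂ k


noncomputable def ddst (Δ t : ℝ) : ℝ := Metric.infDist t (Set.range (fun n : ℕ => 2*Δ*(n:ℝ)))

lemma grid_nonempty (Δ : ℝ) : (Set.range (fun n : ℕ => 2*Δ*(n:ℝ))).Nonempty := ⟨_, ⟨0, rfl⟩⟩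

lemma le_infDist' {s : Set ℝ} (hs : s.Nonempty) {x b : ℝ} (h : ∀ y ∈ s, b ≤ dist x y) :
    b ≤ Metric.infDist x s := by
  by_contra hb
  obtain ⟨y, hy, hlt⟩ := (Metric.infDist_lt_iff hs).1 (lt_of_not_ge hb)
  exact absurd (h y hy) (not_le.2 hlt)

lemma ddst_nonneg (Δ t : ℝ) : 0 ≤ ddst Δ t := Metric.infDist_nonneg

lemma ddst_lip (Δ s t : ℝ) : |ddst Δ s - ddst Δ t| ≤ |s - t| := by
  have h1 := Metric.infDist_le_infDist_add_dist (x := s) (y := t)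
    (s := Set.range (fun n : ℕ => 2*Δ*(n:ℝ)))
  have h2 := Metric.infDist_le_infDist_add_dist (x := t) (y := s)
    (s := Set.range (fun n : ℕ => 2*Δ*(n:ℝ)))
  rw [Real.dist_eq] at h1 h2
  rw [abs_sub_comm t s] at h2
  rw [abs_sub_le_iff]
  constructor
  · simp only [ddst]; linarith
  · simp only [ddst]; linarith

lemma ddst_cont (Δ : ℝ) : Continuous (ddst Δ) := Metric.continuous_infDist_pt _

lemma ddst_le (Δ : ℝ) (hΔ : 0 < Δ) (t : ℝ) (ht : 0 ≤ t) : ddst Δ t ≤ Δ := by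
  set n : ℕ := ⌊(t+Δ)/(2*Δ)⌋₊ with hn
  have h2Δ : 0 < 2*Δ := by linarith
  have hfl : (n:ℝ) ≤ (t+Δ)/(2*Δ) := Nat.floor_le (by positivity)
  have hfl2 : (t+Δ)/(2*Δ) < n + 1 := Nat.lt_floor_add_one _
  have hle : 2*Δ*n ≤ t+Δ := by
    have := mul_le_mul_of_nonneg_left hfl h2Δ.le
    calc 2*Δ*(n:ℝ) ≤ 2*Δ*((t+Δ)/(2*Δ)) := this
    _ = t+Δ := by field_simp
  have hlt : t+Δ < 2*Δ*((n:ℝ)+1) := by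
    have := mul_lt_mul_of_pos_left hfl2 h2Δ
    calc t+Δ = 2*Δ*((t+Δ)/(2*Δ)) := by field_simp
    _ < 2*Δ*((n:ℝ)+1) := this
  have hmem : (2*Δ*(n:ℝ)) ∈ Set.range (fun n : ℕ => 2*Δ*(n:ℝ)) := ⟨n, rfl⟩
  have h := Metric.infDist_le_dist_of_mem (x := t) hmem
  rw [Real.dist_eq] at h
  exact h.trans (abs_le.mpr ⟨by linarith, by linarith⟩)

lemma ddst_eq_left (Δ : ℝ) (hΔ : 0 < Δ) (n : ℕ) (t : ℝ)
    (h1 : 2*Δ*n ≤ t) (h2 : t ≤ 2*Δ*n + Δ) : ddst Δ t = t - 2*Δ*n := by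
  refine le_antisymm ?_ ?_
  · have h := Metric.infDist_le_dist_of_mem (x := t)
      (show (2*Δ*(n:ℝ)) ∈ Set.range (fun n : ℕ => 2*Δ*(n:ℝ)) from ⟨n, rfl⟩)
    rw [Real.dist_eq] at h
    exact h.trans (le_of_eq (abs_of_nonneg (by linarith)))
  · refine le_infDist' (grid_nonempty Δ) ?_
    rintro y ⟨m, rfl⟩
    rw [Real.dist_eq]
    rcases le_or_gt m n with hm | hm
    · have : (m:ℝ) ≤ n := by exact_mod_cast hm
      have : 2*Δ*m ≤ 2*Δ*n := by nlinarith
      calc t - 2*Δ*n ≤ t - 2*Δ*m := by linarith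
      _ ≤ |t - 2*Δ*m| := le_abs_self _
    · have : (n:ℝ) + 1 ≤ m := by exact_mod_cast hm
      have h3 : 2*Δ*((n:ℝ)+1) ≤ 2*Δ*m := by nlinarith
      have : t - 2*Δ*n ≤ 2*Δ*m - t := by nlinarith
      calc t - 2*Δ*n ≤ 2*Δ*m - t := this
      _ = -(t - 2*Δ*m) := by ring
      _ ≤ |t - 2*Δ*m| := neg_le_abs _

lemma ddst_eq_right (Δ : ℝ) (hΔ : 0 < Δ) (n : ℕ) (t : ℝ)
    (h1 : 2*Δ*n + Δ ≤ t) (h2 : t ≤ 2*Δ*n + 2*Δ) : ddst Δ t = 2*Δ*n + 2*Δ - t := by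
  refine le_antisymm ?_ ?_
  · have hmem : (2*Δ*((n:ℝ)+1)) ∈ Set.range (fun m : ℕ => 2*Δ*(m:ℝ)) := by
      refine ⟨n+1, by push_cast; ring⟩
    have h := Metric.infDist_le_dist_of_mem (x := t) hmem
    rw [Real.dist_eq] at h
    refine h.trans (le_of_eq ?_)
    rw [abs_of_nonpos (by linarith)]
    ring
  · refine le_infDist' (grid_nonempty Δ) ?_
    rintro y ⟨m, rfl⟩
    rw [Real.dist_eq]
    rcases le_or_gt ((m:ℕ)) n with hm | hm
    · have : (m:ℝ) ≤ n := by exact_mod_cast hm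
      have h3 : 2*Δ*m ≤ 2*Δ*n := by nlinarith
      have : 2*Δ*n + 2*Δ - t ≤ t - 2*Δ*m := by nlinarith
      calc 2*Δ*n + 2*Δ - t ≤ t - 2*Δ*m := this
      _ ≤ |t - 2*Δ*m| := le_abs_self _
    · have : (n:ℝ) + 1 ≤ m := by exact_mod_cast hm
      have h3 : 2*Δ*((n:ℝ)+1) ≤ 2*Δ*m := by nlinarith
      have : 2*Δ*n + 2*Δ - t ≤ 2*Δ*m - t := by nlinarith
      calc 2*Δ*n + 2*Δ - t ≤ 2*Δ*m - t := this
      _ = -(t - 2*Δ*m) := by ring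
      _ ≤ |t - 2*Δ*m| := neg_le_abs _
noncomputable def wdf (L Δ t : ℝ) : ℝ := L * (Δ/2 - ddst Δ t)
noncomputable def wwf (L Δ t : ℝ) : ℝ := ∫ s in (0:ℝ)..t, wdf L Δ s

lemma wdf_cont (L Δ : ℝ) : Continuous (wdf L Δ) := by
  unfold wdf
  exact continuous_const.mul (continuous_const.sub (ddst_cont Δ))

lemma wdf_intble (L Δ a b : ℝ) : IntervalIntegrable (wdf L Δ) MeasureTheory.volume a b :=
  (wdf_cont L Δ).intervalIntegrable a b

lemma wwf_hasDeriv (L Δ : ℝ) (t : ℝ) : HasDerivAt (wwf L Δ) (wdf L Δ t) t := by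
  exact intervalIntegral.integral_hasDerivAt_right (wdf_intble L Δ 0 t)
    ((wdf_cont L Δ).aestronglyMeasurable.stronglyMeasurableAtFilter) ((wdf_cont L Δ).continuousAt)

lemma wdf_lip (L Δ : ℝ) (hL : 0 ≤ L) (s t : ℝ) : |wdf L Δ s - wdf L Δ t| ≤ L * |s - t| := by
  have : wdf L Δ s - wdf L Δ t = L * (ddst Δ t - ddst Δ s) := by unfold wdf; ring
  rw [this, abs_mul, abs_of_nonneg hL, abs_sub_comm]
  exact mul_le_mul_of_nonneg_left (ddst_lip Δ s t) hL

lemma wdf_bdd (L Δ : ℝ) (hL : 0 ≤ L) (hΔ : 0 < Δ) (t : ℝ) (ht : 0 ≤ t) :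
    |wdf L Δ t| ≤ L * (Δ/2) := by
  have h1 := ddst_nonneg Δ t
  have h2 := ddst_le Δ hΔ t ht
  rw [wdf, abs_mul, abs_of_nonneg hL]
  refine mul_le_mul_of_nonneg_left (abs_le.mpr ⟨by linarith, by linarith⟩) hL

lemma integral_linear (A B a b : ℝ) :
    ∫ t in a..b, (A - B*t) = A*(b-a) - B*(b^2-a^2)/2 := by
  rw [intervalIntegral.integral_sub (intervalIntegrable_const)
    ((by fun_prop : Continuous fun t : ℝ => B*t).intervalIntegrable a b)]
  rw [intervalIntegral.integral_const, intervalIntegral.integral_const_mul]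
  rw [integral_id]
  simp [smul_eq_mul]
  ring

lemma wwf_piece_even (L Δ : ℝ) (hΔ : 0 < Δ) (n : ℕ) :
    ∫ t in (2*Δ*n)..(2*Δ*n+Δ), wdf L Δ t = 0 := by
  have hcong : ∀ t ∈ Set.uIcc (2*Δ*(n:ℝ)) (2*Δ*n+Δ), wdf L Δ t = (L*(Δ/2+2*Δ*n)) - L*t := by
    intro t ht
    rw [Set.uIcc_of_le (by linarith)] at ht
    rw [wdf, ddst_eq_left Δ hΔ n t ht.1 ht.2]
    ring
  rw [intervalIntegral.integral_congr hcong, integral_linear]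
  ring

lemma wwf_piece_odd (L Δ : ℝ) (hΔ : 0 < Δ) (n : ℕ) :
    ∫ t in (2*Δ*n+Δ)..(2*Δ*n+2*Δ), wdf L Δ t = 0 := by
  have hcong : ∀ t ∈ Set.uIcc (2*Δ*(n:ℝ)+Δ) (2*Δ*n+2*Δ),
      wdf L Δ t = (L*(Δ/2-2*Δ*n-2*Δ)) - (-L)*t := by
    intro t ht
    rw [Set.uIcc_of_le (by linarith)] at ht
    rw [wdf, ddst_eq_right Δ hΔ n t ht.1 ht.2]
    ring
  rw [intervalIntegral.integral_congr hcong, integral_linear]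
  ring

lemma wwf_piece (L Δ : ℝ) (hΔ : 0 < Δ) (j : ℕ) :
    ∫ t in ((j:ℝ)*Δ)..(((j:ℕ)+1:ℕ)*Δ), wdf L Δ t = 0 := by
  rcases Nat.even_or_odd j with ⟨n, hn⟩ | ⟨n, hn⟩
  · have h1 : ((j:ℝ))*Δ = 2*Δ*n := by subst hn; push_cast; ring
    have h2 : (((j:ℕ)+1:ℕ):ℝ)*Δ = 2*Δ*n+Δ := by subst hn; push_cast; ring
    rw [h1, h2]; exact wwf_piece_even L Δ hΔ n
  · have h1 : ((j:ℝ))*Δ = 2*Δ*n+Δ := by subst hn; push_cast; ring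
    have h2 : (((j:ℕ)+1:ℕ):ℝ)*Δ = 2*Δ*n+2*Δ := by subst hn; push_cast; ring
    rw [h1, h2]; exact wwf_piece_odd L Δ hΔ n

lemma wwf_sample (L Δ : ℝ) (hΔ : 0 < Δ) (j : ℕ) : wwf L Δ ((j:ℝ)*Δ) = 0 := by
  induction j with
  | zero => simp [wwf]
  | succ n ih =>
    have hadd := intervalIntegral.integral_add_adjacent_intervals
      (wdf_intble L Δ 0 ((n:ℝ)*Δ)) (wdf_intble L Δ ((n:ℝ)*Δ) (((n:ℕ)+1:ℕ)*Δ))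
    have := wwf_piece L Δ hΔ n
    unfold wwf at ih ⊢
    push_cast at hadd this ih ⊢
    rw [← hadd, ih, this]
    ring
lemma wwf_eval (L Δ : ℝ) (hΔ : 0 < Δ) (j : ℕ) (t : ℝ) :
    wwf L Δ t = wwf L Δ ((j:ℝ)*Δ) + ∫ s in ((j:ℝ)*Δ)..t, wdf L Δ s := by
  unfold wwf
  rw [intervalIntegral.integral_add_adjacent_intervals
    (wdf_intble L Δ 0 ((j:ℝ)*Δ)) (wdf_intble L Δ ((j:ℝ)*Δ) t)]

lemma wwf_bdd (L Δ : ℝ) (hL : 0 ≤ L) (hΔ : 0 < Δ) (t : ℝ) (ht : 0 ≤ t) :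
    |wwf L Δ t| ≤ L * Δ^2 / 2 := by
  set j : ℕ := ⌊t/Δ⌋₊ with hj
  have hj1 : (j:ℝ)*Δ ≤ t := by
    have : (j:ℝ) ≤ t/Δ := Nat.floor_le (by positivity)
    calc (j:ℝ)*Δ ≤ (t/Δ)*Δ := by nlinarith
    _ = t := by field_simp
  have hj2 : t < ((j:ℝ)+1)*Δ := by
    have : t/Δ < (j:ℝ)+1 := Nat.lt_floor_add_one _
    calc t = (t/Δ)*Δ := by field_simp
    _ < ((j:ℝ)+1)*Δ := by nlinarith
  rw [wwf_eval L Δ hΔ j t, wwf_sample L Δ hΔ j, zero_add]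
  have hb : ∀ x ∈ Set.uIoc ((j:ℝ)*Δ) t, ‖wdf L Δ x‖ ≤ L * (Δ/2) := by
    intro x hx
    rw [Set.uIoc_of_le hj1] at hx
    have hx0 : 0 ≤ x := le_trans (by positivity) hx.1.le
    exact wdf_bdd L Δ hL hΔ x hx0
  have := intervalIntegral.norm_integral_le_of_norm_le_const hb
  rw [Real.norm_eq_abs] at this
  refine this.trans ?_
  have : |t - (j:ℝ)*Δ| ≤ Δ := abs_le.mpr ⟨by nlinarith, by nlinarith⟩
  nlinarith [mul_nonneg hL hΔ.le]

lemma wwf_lip (L Δ : ℝ) (hL : 0 ≤ L) (hΔ : 0 < Δ) (s t : ℝ) (hs : 0 ≤ s) (ht : 0 ≤ t) :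
    |wwf L Δ s - wwf L Δ t| ≤ (L * (Δ/2)) * |s - t| := by
  have key : wwf L Δ s - wwf L Δ t = ∫ x in t..s, wdf L Δ x := by
    unfold wwf
    rw [← intervalIntegral.integral_add_adjacent_intervals
      (wdf_intble L Δ 0 t) (wdf_intble L Δ t s)]
    ring
  rw [key]
  have hb : ∀ x ∈ Set.uIoc t s, ‖wdf L Δ x‖ ≤ L * (Δ/2) := by
    intro x hx
    have hx0 : 0 ≤ x := le_trans (le_min ht hs) hx.1.le
    exact wdf_bdd L Δ hL hΔ x hx0
  have := intervalIntegral.norm_integral_le_of_norm_le_const hb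
  rw [Real.norm_eq_abs] at this
  exact this

lemma wdf_sample_abs (L Δ : ℝ) (hL : 0 ≤ L) (hΔ : 0 < Δ) (j : ℕ) :
    |wdf L Δ ((j:ℝ)*Δ)| = L * Δ / 2 := by
  rcases Nat.even_or_odd j with ⟨n, hn⟩ | ⟨n, hn⟩
  · have h1 : ((j:ℝ))*Δ = 2*Δ*n := by subst hn; push_cast; ring
    have : ddst Δ ((j:ℝ)*Δ) = 0 := by
      rw [h1, ddst_eq_left Δ hΔ n _ le_rfl (by linarith)]; ring
    rw [wdf, this, abs_mul, abs_of_nonneg hL, abs_of_nonneg (by linarith)]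
    ring
  · have h1 : ((j:ℝ))*Δ = 2*Δ*n+Δ := by subst hn; push_cast; ring
    have : ddst Δ ((j:ℝ)*Δ) = Δ := by
      rw [h1, ddst_eq_right Δ hΔ n _ le_rfl (by linarith)]; ring
    rw [wdf, this, abs_mul, abs_of_nonneg hL, abs_of_nonpos (by linarith)]
    ring
noncomputable def mka (a t : ℝ) : ℝ := 1 - Real.exp (-(a*t^2))
noncomputable def mka' (a t : ℝ) : ℝ := 2*a*t*Real.exp (-(a*t^2))
noncomputable def mka'' (a t : ℝ) : ℝ := (2*a - 4*a^2*t^2)*Real.exp (-(a*t^2))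

lemma inner_hasDeriv (a t : ℝ) : HasDerivAt (fun t : ℝ => -(a*t^2)) (-(2*a*t)) t := by
  have h : HasDerivAt (fun t : ℝ => a*t^2) (a*(2*t)) t := by
    simpa using ((hasDerivAt_pow 2 t).const_mul a)
  have := h.neg
  refine this.congr_deriv ?_
  ring

lemma mka_hasDeriv (a t : ℝ) : HasDerivAt (mka a) (mka' a t) t := by
  have h := ((inner_hasDeriv a t).exp).const_sub 1
  refine h.congr_deriv ?_
  unfold mka'
  ring

lemma mka'_hasDeriv (a t : ℝ) : HasDerivAt (mka' a) (mka'' a t) t := by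
  have h1 : HasDerivAt (fun t : ℝ => 2*a*t) (2*a) t := by
    simpa using (hasDerivAt_id t).const_mul (2*a)
  have h := h1.mul ((inner_hasDeriv a t).exp)
  refine h.congr_deriv ?_
  unfold mka''
  ring

lemma mka_nonneg (a t : ℝ) (ha : 0 ≤ a) : 0 ≤ mka a t := by
  have : Real.exp (-(a*t^2)) ≤ 1 := Real.exp_le_one_iff.mpr (by nlinarith [sq_nonneg t])
  unfold mka; linarith

lemma mka_le_one (a t : ℝ) : mka a t ≤ 1 := by
  have := Real.exp_pos (-(a*t^2))
  unfold mka; linarith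

lemma mka'_bdd (a sa t : ℝ) (ha : a = sa^2) (hsa : 0 ≤ sa) : |mka' a t| ≤ sa := by
  have hE1 : 1 + a*t^2 ≤ Real.exp (a*t^2) := by
    have := Real.add_one_le_exp (a*t^2); linarith
  have hEpos : (0:ℝ) < Real.exp (a*t^2) := Real.exp_pos _
  have hinv : Real.exp (-(a*t^2)) = (Real.exp (a*t^2))⁻¹ := by
    rw [← Real.exp_neg]
  have habs : |mka' a t| = 2*a*|t| *(Real.exp (a*t^2))⁻¹ := by
    unfold mka'
    rw [hinv, abs_mul, abs_of_pos (inv_pos.mpr hEpos)]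
    congr 1
    rw [abs_mul, abs_of_nonneg (by nlinarith : (0:ℝ) ≤ 2*a)]
  rw [habs]
  rw [mul_inv_le_iff₀ hEpos]
  have key : 2*a*|t| ≤ sa * (1 + a*t^2) := by
    subst ha
    rcases abs_cases t with ⟨h,_⟩|⟨h,_⟩ <;> rw [h] <;>
      nlinarith [mul_nonneg hsa (sq_nonneg (1 - sa*t)), mul_nonneg hsa (sq_nonneg (1 + sa*t))]
  nlinarith [mul_le_mul_of_nonneg_left hE1 hsa]

lemma mka''_bdd (a t : ℝ) (ha : 0 ≤ a) : |mka'' a t| ≤ 6*a := by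
  have hE1 : 1 + a*t^2 ≤ Real.exp (a*t^2) := by
    have := Real.add_one_le_exp (a*t^2); linarith
  have hEpos : (0:ℝ) < Real.exp (a*t^2) := Real.exp_pos _
  have hinv : Real.exp (-(a*t^2)) = (Real.exp (a*t^2))⁻¹ := by
    rw [← Real.exp_neg]
  unfold mka''
  rw [hinv, abs_mul, abs_of_nonneg (le_of_lt (inv_pos.mpr hEpos))]
  rw [mul_inv_le_iff₀ hEpos]
  have h1 : |2*a - 4*a^2*t^2| ≤ 2*a + 4*a^2*t^2 := by
    refine abs_le.mpr ⟨by nlinarith [sq_nonneg (a*t)], by nlinarith [sq_nonneg (a*t)]⟩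
  nlinarith [sq_nonneg (a*t), mul_le_mul_of_nonneg_left hE1 ha,
    mul_le_mul_of_nonneg_left hE1 (by nlinarith : (0:ℝ) ≤ 4*a)]

lemma mka_lip (a sa : ℝ) (ha : a = sa^2) (hsa : 0 ≤ sa) (s t : ℝ) :
    |mka a s - mka a t| ≤ sa * |s - t| := by
  have := Convex.norm_image_sub_le_of_norm_hasDerivWithin_le
    (f := mka a) (f' := mka' a) (C := sa) (s := Set.univ)
    (fun x _ => (mka_hasDeriv a x).hasDerivWithinAt)
    (fun x _ => by rw [Real.norm_eq_abs]; exact mka'_bdd a sa x ha hsa)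
    convex_univ (Set.mem_univ t) (Set.mem_univ s)
  simpa [Real.norm_eq_abs] using this

lemma mka'_lip (a : ℝ) (ha : 0 ≤ a) (s t : ℝ) :
    |mka' a s - mka' a t| ≤ (6*a) * |s - t| := by
  have := Convex.norm_image_sub_le_of_norm_hasDerivWithin_le
    (f := mka' a) (f' := mka'' a) (C := 6*a) (s := Set.univ)
    (fun x _ => (mka'_hasDeriv a x).hasDerivWithinAt)
    (fun x _ => by rw [Real.norm_eq_abs]; exact mka''_bdd a x ha)
    convex_univ (Set.mem_univ t) (Set.mem_univ s)
  simpa [Real.norm_eq_abs] using this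

lemma mka_zero (a : ℝ) : mka a 0 = 0 := by unfold mka; norm_num

lemma mka'_zero (a : ℝ) : mka' a 0 = 0 := by unfold mka'; ring

lemma mka_lb (a t δ : ℝ) (hδ : 0 < δ) (hx : 1/δ ≤ a*t^2) : 1 - δ ≤ mka a t := by
  have hxpos : 0 < a*t^2 := lt_of_lt_of_le (by positivity) hx
  have h1 : a*t^2 ≤ Real.exp (a*t^2) := by
    have := Real.add_one_le_exp (a*t^2); linarith
  have h2 : Real.exp (-(a*t^2)) = (Real.exp (a*t^2))⁻¹ := by rw [← Real.exp_neg]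
  have h3 : Real.exp (-(a*t^2)) ≤ (a*t^2)⁻¹ := by
    rw [h2]
    exact inv_anti₀ hxpos h1
  have h4 : (a*t^2)⁻¹ ≤ δ := by
    have h5 : (a*t^2)⁻¹ ≤ (1/δ)⁻¹ := inv_anti₀ (by positivity) hx
    simpa using h5
  unfold mka; linarith
lemma prod_diff_bound {f g : ℝ → ℝ} (Kf Kg Bf Bg s t : ℝ)
    (h1 : |f s - f t| ≤ Kf * |s-t|) (h2 : |g s - g t| ≤ Kg * |s-t|)
    (h3 : |f t| ≤ Bf) (h4 : |g s| ≤ Bg) :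
    |f s * g s - f t * g t| ≤ (Kf*Bg + Bf*Kg) * |s-t| := by
  have e : f s * g s - f t * g t = (f s - f t)*(g s) + (f t)*(g s - g t) := by ring
  calc |f s * g s - f t * g t| ≤ |(f s - f t)*(g s)| + |(f t)*(g s - g t)| := by
        rw [e]; exact abs_add_le _ _
  _ = |f s - f t| * |g s| + |f t| * |g s - g t| := by rw [abs_mul, abs_mul]
  _ ≤ (Kf * |s-t|)*Bg + Bf*(Kg * |s-t|) := by
        refine add_le_add (mul_le_mul h1 h4 (abs_nonneg _) (le_trans (abs_nonneg _) h1))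
          (mul_le_mul h3 h2 (abs_nonneg _) (le_trans (abs_nonneg _) h3))
  _ = (Kf*Bg + Bf*Kg) * |s-t| := by ring

lemma keylemma (L Δ ε : ℝ) (hL : 0 ≤ L) (hΔ : 0 < Δ) (hε : 0 < ε) (hε1 : ε ≤ 1)
    (k : ℕ) (hk : 1 ≤ k) :
    ∃ f f' : ℝ → ℝ, (∀ t : ℝ, HasDerivAt f (f' t) t) ∧
      (∀ s ∈ Set.Ici (0:ℝ), ∀ t ∈ Set.Ici (0:ℝ), |f' s - f' t| ≤ L * |s - t|) ∧
      f 0 = 0 ∧ f' 0 = 0 ∧ (∀ j : ℕ, f ((j:ℝ) * Δ) = 0) ∧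
      ∃ ℓ : ℕ, k ≤ ℓ ∧ (1 - ε) * L * Δ / 2 ≤ |f' ((ℓ:ℝ) * Δ)| := by
  set sa := ε/(6*Δ) with hsa_def
  have hsa : 0 ≤ sa := by positivity
  set a := sa^2 with ha_def
  have ha : 0 ≤ a := sq_nonneg sa
  set c := (1+ε/3)⁻¹ with hc_def
  have hc0 : 0 < c := by rw [hc_def]; positivity
  refine ⟨fun t => c * (mka a t * wwf L Δ t),
    fun t => c * (mka' a t * wwf L Δ t + mka a t * wdf L Δ t), ?_, ?_, ?_, ?_, ?_, ?_⟩
  · intro t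
    exact ((mka_hasDeriv a t).mul (wwf_hasDeriv L Δ t)).const_mul c
  · intro s hs t ht
    simp only [Set.mem_Ici] at hs ht
    have h1 : |mka' a s * wwf L Δ s - mka' a t * wwf L Δ t|
        ≤ ((6*a)*(L*Δ^2/2) + sa*(L*(Δ/2))) * |s-t| :=
      prod_diff_bound (6*a) (L*(Δ/2)) sa (L*Δ^2/2) s t (mka'_lip a ha s t)
        (wwf_lip L Δ hL hΔ s t hs ht) (mka'_bdd a sa t ha_def hsa) (wwf_bdd L Δ hL hΔ s hs)
    have h2 : |mka a s * wdf L Δ s - mka a t * wdf L Δ t|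
        ≤ (sa*(L*(Δ/2)) + 1*L) * |s-t| :=
      prod_diff_bound sa L 1 (L*(Δ/2)) s t (mka_lip a sa ha_def hsa s t)
        (wdf_lip L Δ hL s t)
        (abs_le.mpr ⟨by linarith [mka_nonneg a t ha], mka_le_one a t⟩)
        (wdf_bdd L Δ hL hΔ s hs)
    have haΔ : a*Δ^2 = ε^2/36 := by
      rw [ha_def, hsa_def]; field_simp; ring
    have hsaΔ : sa*Δ = ε/6 := by
      rw [hsa_def]; field_simp
    have hsum : (((6*a)*(L*Δ^2/2) + sa*(L*(Δ/2))) + (sa*(L*(Δ/2)) + 1*L))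
        = L*(3*(a*Δ^2) + (sa*Δ) + 1) := by ring
    have hXle : L*(3*(a*Δ^2) + (sa*Δ) + 1) ≤ L*(1+ε/3) := by
      rw [haΔ, hsaΔ]
      have : 3*(ε^2/36) + ε/6 + 1 ≤ 1+ε/3 := by nlinarith
      exact mul_le_mul_of_nonneg_left this hL
    calc |c * (mka' a s * wwf L Δ s + mka a s * wdf L Δ s)
          - c * (mka' a t * wwf L Δ t + mka a t * wdf L Δ t)|
        = c * |(mka' a s * wwf L Δ s + mka a s * wdf L Δ s)
            - (mka' a t * wwf L Δ t + mka a t * wdf L Δ t)| := by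
          rw [← mul_sub, abs_mul, abs_of_pos hc0]
    _ = c * |(mka' a s * wwf L Δ s - mka' a t * wwf L Δ t)
            + (mka a s * wdf L Δ s - mka a t * wdf L Δ t)| := by
          rw [show (mka' a s * wwf L Δ s + mka a s * wdf L Δ s)
            - (mka' a t * wwf L Δ t + mka a t * wdf L Δ t)
            = (mka' a s * wwf L Δ s - mka' a t * wwf L Δ t)
            + (mka a s * wdf L Δ s - mka a t * wdf L Δ t) from by ring]
    _ ≤ c * (|mka' a s * wwf L Δ s - mka' a t * wwf L Δ t|
            + |mka a s * wdf L Δ s - mka a t * wdf L Δ t|) :=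
          mul_le_mul_of_nonneg_left (abs_add_le _ _) hc0.le
    _ ≤ c * ((((6*a)*(L*Δ^2/2) + sa*(L*(Δ/2))) + (sa*(L*(Δ/2)) + 1*L)) * |s-t|) := by
          refine mul_le_mul_of_nonneg_left ?_ hc0.le
          rw [add_mul]
          exact add_le_add h1 h2
    _ = (c * (((6*a)*(L*Δ^2/2) + sa*(L*(Δ/2))) + (sa*(L*(Δ/2)) + 1*L))) * |s-t| := by ring
    _ ≤ L * |s-t| := by
          refine mul_le_mul_of_nonneg_right ?_ (abs_nonneg _)
          rw [hsum]
          calc c * (L*(3*(a*Δ^2) + (sa*Δ) + 1)) ≤ c * (L*(1+ε/3)) :=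
                mul_le_mul_of_nonneg_left hXle hc0.le
          _ = L := by rw [hc_def]; field_simp
  · show c * (mka a 0 * wwf L Δ 0) = 0
    rw [mka_zero]; ring
  · show c * (mka' a 0 * wwf L Δ 0 + mka a 0 * wdf L Δ 0) = 0
    rw [mka_zero, mka'_zero]; ring
  · intro j
    show c * (mka a ((j:ℝ)*Δ) * wwf L Δ ((j:ℝ)*Δ)) = 0
    rw [wwf_sample L Δ hΔ j]; ring
  · refine ⟨k + ⌈(108:ℝ)/ε^3⌉₊, Nat.le_add_right _ _, ?_⟩
    set ℓ : ℕ := k + ⌈(108:ℝ)/ε^3⌉₊ with hℓ_def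
    have hw0 : wwf L Δ ((ℓ:ℝ)*Δ) = 0 := wwf_sample L Δ hΔ ℓ
    have hrw : c * (mka' a ((ℓ:ℝ)*Δ) * wwf L Δ ((ℓ:ℝ)*Δ) + mka a ((ℓ:ℝ)*Δ) * wdf L Δ ((ℓ:ℝ)*Δ))
        = c * mka a ((ℓ:ℝ)*Δ) * wdf L Δ ((ℓ:ℝ)*Δ) := by rw [hw0]; ring
    have hm0 : 0 ≤ mka a ((ℓ:ℝ)*Δ) := mka_nonneg _ _ ha
    have habs : |c * (mka' a ((ℓ:ℝ)*Δ) * wwf L Δ ((ℓ:ℝ)*Δ) + mka a ((ℓ:ℝ)*Δ) * wdf L Δ ((ℓ:ℝ)*Δ))|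
        = c * mka a ((ℓ:ℝ)*Δ) * (L*Δ/2) := by
      rw [hrw, abs_mul, abs_mul, abs_of_pos hc0, abs_of_nonneg hm0,
        wdf_sample_abs L Δ hL hΔ ℓ]
    show (1 - ε) * L * Δ / 2 ≤ |c * (mka' a ((ℓ:ℝ)*Δ) * wwf L Δ ((ℓ:ℝ)*Δ)
        + mka a ((ℓ:ℝ)*Δ) * wdf L Δ ((ℓ:ℝ)*Δ))|
    rw [habs]
    -- lower bound on mka
    have hℓ1 : (1:ℝ) ≤ (ℓ:ℝ) := by
      have : 1 ≤ ℓ := le_trans hk (Nat.le_add_right _ _)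
      exact_mod_cast this
    have hℓR : (108:ℝ)/ε^3 ≤ (ℓ:ℝ) := by
      refine le_trans (Nat.le_ceil _) ?_
      exact_mod_cast Nat.le_add_left _ k
    have h108 : 108 ≤ (ℓ:ℝ) * ε^3 := by
      rw [div_le_iff₀ (by positivity)] at hℓR; linarith
    have hsq : (ℓ:ℝ) ≤ (ℓ:ℝ)^2 := by nlinarith
    have harg : a*(((ℓ:ℝ))*Δ)^2 = ε^2*(ℓ:ℝ)^2/36 := by
      rw [ha_def, hsa_def]; field_simp; ring
    have hmlb : 1 - ε/3 ≤ mka a ((ℓ:ℝ)*Δ) := by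
      refine mka_lb a _ (ε/3) (by positivity) ?_
      rw [harg]
      rw [div_le_div_iff₀ (by positivity) (by norm_num : (0:ℝ) < 36)]
      nlinarith [mul_le_mul_of_nonneg_right hsq (by positivity : (0:ℝ) ≤ ε^3)]
    have hcm : 1 - ε ≤ c * mka a ((ℓ:ℝ)*Δ) := by
      have h1 : 1 - ε ≤ c * (1 - ε/3) := by
        rw [hc_def]
        rw [mul_comm, ← div_eq_mul_inv, le_div_iff₀ (by linarith)]
        nlinarith
      calc 1 - ε ≤ c * (1 - ε/3) := h1
      _ ≤ c * mka a ((ℓ:ℝ)*Δ) := mul_le_mul_of_nonneg_left hmlb hc0.le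
    have hLΔ : 0 ≤ L*Δ/2 := by positivity
    calc (1 - ε) * L * Δ / 2 = (1-ε) * (L*Δ/2) := by ring
    _ ≤ (c * mka a ((ℓ:ℝ)*Δ)) * (L*Δ/2) := mul_le_mul_of_nonneg_right hcm hLΔ
    _ = c * mka a ((ℓ:ℝ)*Δ) * (L*Δ/2) := by ring
theorem stmt18 (L N R Δ : ℝ) (hL : 0 ≤ L) (hN : 0 ≤ N) (hR : 0 ≤ R) (hΔ : 0 < Δ)
    (D : (ℝ → ℝ) → ℕ → ℝ) (hD : SampleCausal Δ D) :
    ∀ k : ℕ, 1 ≤ k → ∀ ε : ℝ, 0 < ε →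
      ∃ f f' : ℝ → ℝ, IsFLR L 0 f f' ∧ ∃ ℓ : ℕ, k ≤ ℓ ∧
        (1 - ε) * L * Δ / 2 ≤ |f' (ℓ * Δ) - D f ℓ| := by
  intro k hk ε hε
  set ε' := min ε 1 with hε'_def
  have hε'0 : 0 < ε' := lt_min hε one_pos
  have hε'1 : ε' ≤ 1 := min_le_right _ _
  have hε'ε : ε' ≤ ε := min_le_left _ _
  obtain ⟨f, f', hderiv, hlip, hf0, hf'0, hsamp, ℓ, hkl, hbig⟩ :=
    keylemma L Δ ε' hL hΔ hε'0 hε'1 k hk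
  have hIs : IsFLR L 0 f f' :=
    ⟨⟨fun t _ => (hderiv t).hasDerivWithinAt, hlip⟩, by rw [hf0]; simp, by rw [hf'0]; simp⟩
  have hIsneg : IsFLR L 0 (fun t => -f t) (fun t => -f' t) := by
    refine ⟨⟨fun t ht => (hderiv t).neg.hasDerivWithinAt, ?_⟩, by simp [hf0], by simp [hf'0]⟩
    intro s hs t ht
    have : -f' s - -f' t = -(f' s - f' t) := by ring
    rw [this, abs_neg]
    exact hlip s hs t ht
  have hDeq : D f ℓ = D (fun t => -f t) ℓ := by
    refine hD f (fun t => -f t) ℓ (fun j _ => ?_)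
    have := hsamp j
    simp only [this]
    norm_num
  have hmono : (1 - ε) * L * Δ / 2 ≤ (1 - ε') * L * Δ / 2 := by
    have h1 : 0 ≤ L * Δ := mul_nonneg hL hΔ.le
    nlinarith
  by_cases hcase : (1 - ε') * L * Δ / 2 ≤ |f' ((ℓ:ℝ) * Δ) - D f ℓ|
  · exact ⟨f, f', hIs, ℓ, hkl, le_trans hmono hcase⟩
  · refine ⟨(fun t => -f t), (fun t => -f' t), hIsneg, ℓ, hkl, ?_⟩
    push_neg at hcase
    set A := f' ((ℓ:ℝ) * Δ) with hA
    set x := D f ℓ with hx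
    have hval : -f' ((ℓ:ℝ) * Δ) - D (fun t => -f t) ℓ = -(A + x) := by
      rw [← hDeq]; ring
    show (1 - ε) * L * Δ / 2 ≤ |-f' ((ℓ:ℝ) * Δ) - D (fun t => -f t) ℓ|
    rw [hval, abs_neg]
    have h2A : |2*A| ≤ |A + x| + |A - x| := by
      have := abs_add_le (A + x) (A - x)
      have he : (A + x) + (A - x) = 2*A := by ring
      rw [he] at this
      exact this
    rw [abs_mul, abs_of_nonneg (by norm_num : (0:ℝ) ≤ 2)] at h2A
    refine le_trans hmono ?_
    have hB : (1 - ε') * L * Δ / 2 ≤ |A| := hbig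
    linarith
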